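/- Let G be the group with presentation ⟨a, b | aba = bab, a² = b²⟩ (the fundamental group of the affine complement of Zariski's three-cuspidal quartic with a generic line at infinity). Then the commutator subgroup [G,G] is isomorphic to the cyclic group ℤ/3ℤ. -/

import Mathlib

/-- The relators `(aba)(bab)⁻¹` and `a²b⁻²` of the presentation
`⟨a, b | aba = bab, a² = b²⟩` of the fundamental group of the affine complement of
Zariski's three-cuspidal quartic (with a generic line at infinity). -/
def zariskiRels : Set (FreeGroup (Fin 2)) :=
  {FreeGroup.of 0 * FreeGroup.of 1 * FreeGroup.of 0 *
      (FreeGroup.of 1 * FreeGroup.of 0 * FreeGroup.of 1)⁻¹,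
   FreeGroup.of 0 ^ 2 * (FreeGroup.of 1 ^ 2)⁻¹}

namespace ZariskiAux

abbrev G := PresentedGroup zariskiRels

def a : G := PresentedGroup.of 0
def b : G := PresentedGroup.of 1
def x : G := a * b⁻¹

lemma x_def : x = a * b⁻¹ := rfl

lemma rel1 : a * b * a = b * a * b := by
  have h : (PresentedGroup.mk zariskiRels) (FreeGroup.of 0 * FreeGroup.of 1 * FreeGroup.of 0 *
      (FreeGroup.of 1 * FreeGroup.of 0 * FreeGroup.of 1)⁻¹) = 1 := by
    apply (QuotientGroup.eq_one_iff _).2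
    exact Subgroup.subset_normalClosure (Set.mem_insert _ _)
  simp only [map_mul, map_inv] at h
  exact mul_inv_eq_one.mp h

lemma rel2 : a ^ 2 = b ^ 2 := by
  have h : (PresentedGroup.mk zariskiRels) (FreeGroup.of 0 ^ 2 * (FreeGroup.of 1 ^ 2)⁻¹) = 1 := by
    apply (QuotientGroup.eq_one_iff _).2
    exact Subgroup.subset_normalClosure (Set.mem_insert_of_mem _ rfl)
  simp only [map_mul, map_inv, map_pow] at h
  exact mul_inv_eq_one.mp h

lemma rel2m : a * a = b * b := by
  have := rel2; rwa [pow_two, pow_two] at this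

lemma rel2i : b⁻¹ * b⁻¹ = a⁻¹ * a⁻¹ := by
  rw [← mul_inv_rev, ← mul_inv_rev, rel2m]

lemma x_eq : x = a⁻¹ * b := by
  rw [x_def]
  calc a * b⁻¹ = a⁻¹ * (a * a) * b⁻¹ := by simp [mul_assoc]
  _ = a⁻¹ * (b * b) * b⁻¹ := by rw [rel2m]
  _ = a⁻¹ * b := by simp [mul_assoc]

lemma bab : b * a * b⁻¹ = a * b * a⁻¹ := by
  calc b * a * b⁻¹ = (b * a * b) * (b⁻¹ * b⁻¹) := by simp [mul_assoc]
  _ = (a * b * a) * (a⁻¹ * a⁻¹) := by rw [← rel1, rel2i]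
  _ = a * b * a⁻¹ := by simp [mul_assoc]

lemma x_cube' : x * x * x = 1 := by
  have hswap : a⁻¹ * b = a * b⁻¹ := x_eq.symm
  rw [x_eq]
  nth_rewrite 2 [hswap]
  calc (a⁻¹ * b) * (a * b⁻¹) * (a⁻¹ * b) = a⁻¹ * (b * a * b⁻¹) * (a⁻¹ * b) := by
        simp [mul_assoc]
  _ = a⁻¹ * (a * b * a⁻¹) * (a⁻¹ * b) := by rw [bab]
  _ = b * (a⁻¹ * a⁻¹) * b := by simp [mul_assoc]
  _ = b * (b⁻¹ * b⁻¹) * b := by rw [rel2i]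
  _ = 1 := by simp [mul_assoc]

lemma x_cube : x ^ 3 = 1 := by
  have : x ^ 3 = x * x * x := by rw [pow_succ, pow_succ, pow_one]
  rw [this, x_cube']

lemma key : a * x * a⁻¹ = x⁻¹ := by
  rw [x_def]
  calc a * (a * b⁻¹) * a⁻¹ = (b * b) * (b⁻¹ * a⁻¹) := by rw [← rel2m]; simp [mul_assoc]
  _ = b * a⁻¹ := by simp [mul_assoc]
  _ = (a * b⁻¹)⁻¹ := by rw [mul_inv_rev, inv_inv]

lemma key' : a⁻¹ * x * a = x⁻¹ := by
  have h : a * x⁻¹ * a⁻¹ = x := by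
    simpa [mul_inv_rev, mul_assoc] using congrArg Inv.inv key
  calc a⁻¹ * x * a = a⁻¹ * (a * x⁻¹ * a⁻¹) * a := by rw [h]
  _ = x⁻¹ := by simp [mul_assoc]

lemma conj_zpow (k : ℤ) : a * x ^ k * a⁻¹ = x ^ (-k) := by
  have h1 : a * x ^ k * a⁻¹ = (MulAut.conj a) (x ^ k) := by simp [MulAut.conj_apply, mul_assoc]
  have h2 : (MulAut.conj a) x = x⁻¹ := by simpa [MulAut.conj_apply, mul_assoc] using key
  rw [h1, map_zpow, h2, inv_zpow, ← zpow_neg]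

lemma conj_zpow' (k : ℤ) : a⁻¹ * x ^ k * a = x ^ (-k) := by
  have h1 : a⁻¹ * x ^ k * a = (MulAut.conj a⁻¹) (x ^ k) := by
    simp [MulAut.conj_apply, mul_assoc]
  have h2 : (MulAut.conj a⁻¹) x = x⁻¹ := by simpa [MulAut.conj_apply, mul_assoc] using key'
  rw [h1, map_zpow, h2, inv_zpow, ← zpow_neg]

lemma conj_pow_a (m : ℤ) : ∃ s : ℤ, ∀ j : ℤ, a ^ m * x ^ j * (a ^ m)⁻¹ = x ^ (s * j) := by
  induction m using Int.induction_on with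
  | zero => exact ⟨1, fun j => by simp⟩
  | succ n ih =>
    obtain ⟨s, hs⟩ := ih
    refine ⟨-s, fun j => ?_⟩
    calc a ^ ((n : ℤ) + 1) * x ^ j * (a ^ ((n : ℤ) + 1))⁻¹
        = a ^ (n : ℤ) * (a * x ^ j * a⁻¹) * (a ^ (n : ℤ))⁻¹ := by
          rw [zpow_add_one, mul_inv_rev]; simp [mul_assoc]
    _ = a ^ (n : ℤ) * x ^ (-j) * (a ^ (n : ℤ))⁻¹ := by rw [conj_zpow]
    _ = x ^ (s * -j) := hs _
    _ = x ^ (-s * j) := by rw [mul_neg, neg_mul]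
  | pred n ih =>
    obtain ⟨s, hs⟩ := ih
    refine ⟨-s, fun j => ?_⟩
    calc a ^ (-(n : ℤ) - 1) * x ^ j * (a ^ (-(n : ℤ) - 1))⁻¹
        = a ^ (-(n : ℤ)) * (a⁻¹ * x ^ j * a) * (a ^ (-(n : ℤ)))⁻¹ := by
          rw [zpow_sub_one, mul_inv_rev, inv_inv]; simp [mul_assoc]
    _ = a ^ (-(n : ℤ)) * x ^ (-j) * (a ^ (-(n : ℤ)))⁻¹ := by rw [conj_zpow']
    _ = x ^ (s * -j) := hs _
    _ = x ^ (-s * j) := by rw [mul_neg, neg_mul]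

/-- Every element of `G` has the form `x ^ j * a ^ m`. -/
def S : Subgroup G where
  carrier := {g | ∃ j m : ℤ, g = x ^ j * a ^ m}
  one_mem' := ⟨0, 0, by simp⟩
  mul_mem' := by
    rintro g1 g2 ⟨j1, m1, rfl⟩ ⟨j2, m2, rfl⟩
    obtain ⟨s, hs⟩ := conj_pow_a m1
    refine ⟨j1 + s * j2, m1 + m2, ?_⟩
    calc x ^ j1 * a ^ m1 * (x ^ j2 * a ^ m2)
        = x ^ j1 * (a ^ m1 * x ^ j2 * (a ^ m1)⁻¹) * (a ^ m1 * a ^ m2) := by simp [mul_assoc]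
    _ = x ^ j1 * x ^ (s * j2) * a ^ (m1 + m2) := by rw [hs, zpow_add]
    _ = x ^ (j1 + s * j2) * a ^ (m1 + m2) := by rw [← zpow_add]
  inv_mem' := by
    rintro g ⟨j, m, rfl⟩
    obtain ⟨s, hs⟩ := conj_pow_a (-m)
    refine ⟨s * -j, -m, ?_⟩
    calc (x ^ j * a ^ m)⁻¹ = a ^ (-m) * x ^ (-j) := by
          rw [mul_inv_rev, zpow_neg, zpow_neg]
    _ = (a ^ (-m) * x ^ (-j) * (a ^ (-m))⁻¹) * a ^ (-m) := by simp [mul_assoc]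
    _ = x ^ (s * -j) * a ^ (-m) := by rw [hs]

lemma mem_S (g : G) : g ∈ S := by
  apply PresentedGroup.generated_by
  intro j
  fin_cases j
  · exact ⟨0, 1, by simp [a]⟩
  · refine ⟨-1, 1, ?_⟩
    show b = x ^ (-1 : ℤ) * a ^ (1 : ℤ)
    rw [zpow_neg_one, zpow_one, x_def, mul_inv_rev, inv_inv]
    simp [mul_assoc]

/-- The exponent-sum homomorphism `G →* ℤ`. -/
def q : G →* Multiplicative ℤ :=
  PresentedGroup.toGroup (f := fun _ => Multiplicative.ofAdd 1) (by
    intro r hr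
    rcases hr with h | h <;> subst h <;>
      simp only [map_mul, map_inv, map_pow, FreeGroup.lift_apply_of] <;>
      exact mul_inv_eq_one.mpr rfl)

lemma q_a : q a = Multiplicative.ofAdd 1 := PresentedGroup.toGroup.of _
lemma q_b : q b = Multiplicative.ofAdd 1 := PresentedGroup.toGroup.of _

lemma q_x : q x = 1 := by
  rw [x_def, map_mul, map_inv, q_a, q_b, mul_inv_cancel]

lemma ker_q_le (g : G) (hg : q g = 1) : g ∈ Subgroup.zpowers x := by
  obtain ⟨j, m, rfl⟩ := mem_S g
  have h : q (x ^ j * a ^ m) = Multiplicative.ofAdd m := by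
    rw [map_mul, map_zpow, map_zpow, q_x, q_a, one_zpow, one_mul, ← ofAdd_zsmul,
      smul_eq_mul, mul_one]
  rw [hg] at h
  have hm : m = 0 := by
    have := congrArg Multiplicative.toAdd h
    simpa using this.symm
  rw [hm, zpow_zero, mul_one]
  exact Subgroup.zpow_mem_zpowers x j

lemma comm_le : commutator G ≤ Subgroup.zpowers x := by
  rw [commutator_def, Subgroup.commutator_le]
  intro g1 _ g2 _
  apply ker_q_le
  rw [map_commutatorElement]
  exact commutatorElement_eq_one_iff_commute.mpr (mul_comm _ _)

open commutatorElement in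
lemma x_mem : x ∈ commutator G := by
  have h : ⁅a, x⁆ = x := by
    rw [commutatorElement_def, key, ← mul_inv_rev]
    exact inv_eq_of_mul_eq_one_right x_cube'
  rw [commutator_def, ← h]
  exact Subgroup.commutator_mem_commutator (Subgroup.mem_top _) (Subgroup.mem_top _)

lemma comm_eq : commutator G = Subgroup.zpowers x :=
  le_antisymm comm_le (Subgroup.zpowers_le.2 x_mem)

/-- A homomorphism to `S₃` detecting that `x ≠ 1`. -/
def ρ : G →* Equiv.Perm (Fin 3) :=
  PresentedGroup.toGroup (f := fun i => if i = 0 then Equiv.swap 0 1 else Equiv.swap 1 2) (by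
    intro r hr
    rcases hr with h | h <;> subst h <;>
      simp only [map_mul, map_inv, map_pow, FreeGroup.lift_apply_of] <;> decide)

lemma x_ne : x ≠ 1 := by
  intro h
  have hx : ρ x = Equiv.swap 0 1 * (Equiv.swap 1 2)⁻¹ := by
    rw [x_def, map_mul, map_inv]
    have h0 : ρ a = Equiv.swap 0 1 := PresentedGroup.toGroup.of _
    have h1 : ρ b = Equiv.swap 1 2 := PresentedGroup.toGroup.of _
    rw [h0, h1]
  rw [h, map_one] at hx
  exact absurd hx.symm (by decide)

lemma orderOf_x : orderOf x = 3 :=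
  haveI : Fact (Nat.Prime 3) := ⟨by norm_num⟩
  orderOf_eq_prime x_cube x_ne

lemma hx3 : zmultiplesHom (Additive G) (Additive.ofMul x) ((3 : ℕ) : ℤ) = 0 := by
  show ((3 : ℕ) : ℤ) • Additive.ofMul x = 0
  rw [← ofMul_zpow, ofMul_eq_zero, zpow_natCast, x_cube]

/-- The homomorphism `ℤ/3 → G` sending the generator to `x`. -/
def χ : Multiplicative (ZMod 3) →* G :=
  AddMonoidHom.toMultiplicativeLeft
    (ZMod.lift 3 ⟨zmultiplesHom (Additive G) (Additive.ofMul x), hx3⟩)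

lemma χ_intCast (k : ℤ) : χ (Multiplicative.ofAdd ((k : ZMod 3))) = x ^ k := by
  have h : χ (Multiplicative.ofAdd ((k : ZMod 3))) = Additive.toMul
      ((ZMod.lift 3 ⟨zmultiplesHom (Additive G) (Additive.ofMul x), hx3⟩)
        ((k : ZMod 3))) := rfl
  rw [h, ZMod.lift_coe, zmultiplesHom_apply, ← ofMul_zpow, toMul_ofMul]

lemma x_sq_ne : x ^ (2 : ℤ) ≠ 1 := by
  intro h
  rw [show (2 : ℤ) = ((2 : ℕ) : ℤ) from rfl, zpow_natCast] at h
  have := orderOf_dvd_of_pow_eq_one h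
  rw [orderOf_x] at this
  omega

lemma χ_inj : Function.Injective χ := by
  rw [injective_iff_map_eq_one]
  intro z hz
  have hcases : ∀ w : ZMod 3, w = ((0 : ℤ) : ZMod 3) ∨ w = ((1 : ℤ) : ZMod 3) ∨
      w = ((2 : ℤ) : ZMod 3) := by decide
  have hz' : z = Multiplicative.ofAdd (Multiplicative.toAdd z) := rfl
  rcases hcases (Multiplicative.toAdd z) with h | h | h
  · rw [hz', h]; rfl
  · exfalso
    rw [hz', h, χ_intCast, zpow_one] at hz
    exact x_ne hz
  · exfalso
    rw [hz', h, χ_intCast] at hz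
    exact x_sq_ne hz

lemma χ_range : χ.range = Subgroup.zpowers x := by
  apply le_antisymm
  · rintro _ ⟨z, rfl⟩
    obtain ⟨k, hk⟩ := ZMod.intCast_surjective (Multiplicative.toAdd z)
    have hz' : z = Multiplicative.ofAdd ((k : ZMod 3)) := by rw [hk]; rfl
    rw [hz', χ_intCast]
    exact Subgroup.zpow_mem_zpowers x k
  · rw [Subgroup.zpowers_le]
    exact ⟨Multiplicative.ofAdd ((1 : ℤ) : ZMod 3), by rw [χ_intCast, zpow_one]⟩

end ZariskiAux

/-- For `G = ⟨a, b | aba = bab, a² = b²⟩`, the commutator subgroup `[G,G]`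
is isomorphic to the cyclic group `ℤ/3ℤ`. -/
theorem zariski_commutator_iso_zmod3 :
    Nonempty (↥(commutator (PresentedGroup zariskiRels)) ≃* Multiplicative (ZMod 3)) := by
  refine ⟨?_⟩
  have e1 : Multiplicative (ZMod 3) ≃* ZariskiAux.χ.range :=
    MonoidHom.ofInjective ZariskiAux.χ_inj
  exact (MulEquiv.subgroupCongr
    (ZariskiAux.comm_eq.trans ZariskiAux.χ_range.symm)).trans e1.symm
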